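/- Let N ≥ 2 and let p > 1 be real. There exists a constant C > 0, depending only on p, such that for every integer k ≥ 2, every r > 0 and every ȳ″ ∈ ℝ^{N−2}, the regular polygon points x_j satisfy Σ_{j=2}^k |x_1 − x_j|^{−p} ≤ C (k/r)^p. -/

import Mathlib

open Real MeasureTheory Finset

noncomputable section

abbrev E (N : ℕ) := EuclideanSpace ℝ (Fin N)

/-- The standard bubble `w_{x,λ}(y) = (N(N-2))^{(N-2)/4} (λ/(1+λ²|y-x|²))^{(N-2)/2}`. -/
def bubble (N : ℕ) (x : E N) (l : ℝ) (y : E N) : ℝ :=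
  ((N : ℝ) * ((N : ℝ) - 2)) ^ (((N : ℝ) - 2) / 4) *
    (l / (1 + l ^ 2 * ‖y - x‖ ^ 2)) ^ (((N : ℝ) - 2) / 2)

/-- The points on the regular `k`-polygon (0-indexed: `pt N k r y2 j` is `x_{j+1}`). -/
def pt (N k : ℕ) (r : ℝ) (y2 : E (N - 2)) (j : ℕ) : E N :=
  (EuclideanSpace.equiv (Fin N) ℝ).symm fun i =>
    if h0 : (i : ℕ) = 0 then r * Real.cos (2 * Real.pi * j / k)
    else if h1 : (i : ℕ) = 1 then r * Real.sin (2 * Real.pi * j / k)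
    else y2 ⟨(i : ℕ) - 2, by have := i.2; omega⟩

/-- `τ = (N-4)/(N-2)`. -/
def tau (N : ℕ) : ℝ := ((N : ℝ) - 4) / ((N : ℝ) - 2)

lemma pt_sub_norm (N k : ℕ) (hN : 2 ≤ N) (r : ℝ) (hr : 0 ≤ r) (y2 : E (N-2)) (j : ℕ) :
    ‖pt N k r y2 0 - pt N k r y2 j‖ = 2 * r * |Real.sin (Real.pi * j / k)| := by
  have h0 : (0:ℕ) < N := by omega
  have h1 : (1:ℕ) < N := by omega
  set θ := 2 * Real.pi * (j:ℝ) / k with hθ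
  have happ : ∀ i : Fin N, (pt N k r y2 0 - pt N k r y2 j) i =
      if (i:ℕ) = 0 then r - r * Real.cos θ else if (i:ℕ) = 1 then -(r * Real.sin θ) else 0 := by
    intro i
    rcases Nat.lt_or_ge (i:ℕ) 1 with h | h
    · have : (i:ℕ) = 0 := by omega
      simp [pt, this, PiLp.sub_apply, hθ]
    rcases Nat.lt_or_ge (i:ℕ) 2 with h' | h'
    · have : (i:ℕ) = 1 := by omega
      simp [pt, this, PiLp.sub_apply, hθ]
    · have e0 : ¬ (i:ℕ) = 0 := by omega
      have e1 : ¬ (i:ℕ) = 1 := by omega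
      simp [pt, e0, e1, PiLp.sub_apply]
  have hnorm : ‖pt N k r y2 0 - pt N k r y2 j‖
      = Real.sqrt ((r - r * Real.cos θ)^2 + (r * Real.sin θ)^2) := by
    rw [EuclideanSpace.norm_eq]
    congr 1
    have hsub : ({⟨0, h0⟩, ⟨1, h1⟩} : Finset (Fin N)) ⊆ Finset.univ := Finset.subset_univ _
    rw [← Finset.sum_subset hsub]
    · rw [Finset.sum_pair (by simp [Fin.ext_iff] : (⟨0,h0⟩ : Fin N) ≠ ⟨1,h1⟩)]
      simp [happ, sq_abs, neg_sq, abs_mul, mul_pow]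
    · intro i _ hi
      have e0 : ¬ (i:ℕ) = 0 := fun h => hi (by simp [Fin.ext_iff, h])
      have e1 : ¬ (i:ℕ) = 1 := fun h => hi (by simp [Fin.ext_iff, h])
      simp [happ i, e0, e1]
  have hsin : Real.sin (θ/2) ^ 2 = (1 - Real.cos θ)/2 := by
    rw [Real.sin_sq_eq_half_sub]; ring_nf
  have hkey : (r - r * Real.cos θ)^2 + (r * Real.sin θ)^2 = (2 * r * |Real.sin (θ/2)|)^2 := by
    have hs := Real.sin_sq θ
    have : (r - r * Real.cos θ)^2 + (r * Real.sin θ)^2 = r^2 * (2 - 2*Real.cos θ) := by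
      nlinarith [Real.sin_sq_add_cos_sq θ]
    rw [this, mul_pow, mul_pow, sq_abs, hsin]; ring
  rw [hnorm, hkey, Real.sqrt_sq (by positivity)]
  congr 2
  rw [hθ]; ring

lemma sin_lb (k m : ℕ) (hm : 1 ≤ m) (h2 : 2 * m ≤ k) :
    (m : ℝ) / k ≤ Real.sin (Real.pi * m / k) := by
  have hkn : 0 < k := by omega
  have hk : 0 < (k:ℝ) := by exact_mod_cast hkn
  have hx0 : 0 ≤ Real.pi * m / k := by positivity
  have hx1 : Real.pi * m / k ≤ Real.pi / 2 := by
    rw [div_le_div_iff₀ hk two_pos]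
    have : (2*m:ℝ) ≤ k := by exact_mod_cast h2
    nlinarith [Real.pi_pos]
  have := Real.mul_le_sin hx0 hx1
  have hcalc : 2 / Real.pi * (Real.pi * m / k) = 2 * m / k := by
    field_simp
  rw [hcalc] at this
  refine le_trans ?_ this
  rw [div_le_div_iff₀ hk hk]
  nlinarith [(Nat.one_le_cast (α := ℝ)).mpr hm]

/-- Sum of inverse powers of mutual distances of the polygon points. -/
theorem polygon_distance_sum (N : ℕ) (hN : 2 ≤ N) (p : ℝ) (hp : 1 < p) :
    ∃ C : ℝ, 0 < C ∧ ∀ k : ℕ, 2 ≤ k → ∀ r : ℝ, 0 < r → ∀ y2 : E (N - 2),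
      (∑ j ∈ Finset.Ico 1 k, ‖pt N k r y2 0 - pt N k r y2 j‖ ^ (-p))
        ≤ C * ((k : ℝ) / r) ^ p := by
  have hS : Summable (fun n : ℕ => (n:ℝ) ^ (-p)) :=
    Real.summable_nat_rpow.mpr (by linarith)
  set S : ℝ := ∑' n : ℕ, (n:ℝ) ^ (-p) with hSdef
  have hSpos : 0 < S := by
    refine Summable.tsum_pos hS (fun n => Real.rpow_nonneg (Nat.cast_nonneg n) _) 1 ?_
    simp
  refine ⟨2 * S, by positivity, ?_⟩
  intro k hk r hr y2
  have hk0 : 0 < (k:ℝ) := by positivity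
  -- termwise bound
  have hterm : ∀ j ∈ Finset.Ico 1 k,
      ‖pt N k r y2 0 - pt N k r y2 j‖ ^ (-p)
        ≤ ((k:ℝ)/r) ^ p * (((j:ℝ) ^ (-p)) + (((k-j : ℕ):ℝ) ^ (-p))) := by
    intro j hj
    rw [Finset.mem_Ico] at hj
    obtain ⟨hj1, hjk⟩ := hj
    set m : ℕ := min j (k - j) with hm
    have hm1 : 1 ≤ m := by omega
    have hm2 : 2 * m ≤ k := by omega
    -- lower bound on the distance
    have hsinm : Real.sin (Real.pi * m / k) ≤ Real.sin (Real.pi * j / k) := by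
      rcases Nat.le_total j (k - j) with h | h
      · rw [hm, min_eq_left h]
      · have hmr : m = k - j := by omega
        have hcast : ((k - j : ℕ) : ℝ) = (k:ℝ) - j := by
          rw [Nat.cast_sub (by omega)]
        have : Real.pi * j / k = Real.pi - Real.pi * (k - j : ℕ) / k := by
          rw [hcast]; field_simp; ring
        rw [this, Real.sin_pi_sub, hmr]
    have hdist : r * m / k ≤ ‖pt N k r y2 0 - pt N k r y2 j‖ := by
      rw [pt_sub_norm N k hN r hr.le y2 j]
      have h1 : (m:ℝ)/k ≤ Real.sin (Real.pi * m / k) := sin_lb k m hm1 hm2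
      have h2 : (m:ℝ)/k ≤ Real.sin (Real.pi * j / k) := h1.trans hsinm
      have h3 : Real.sin (Real.pi * j / k) ≤ |Real.sin (Real.pi * j / k)| := le_abs_self _
      have hmk : 0 < (m:ℝ)/k := by positivity
      have h4 := h2.trans h3
      have h5 := mul_le_mul_of_nonneg_left h4 hr.le
      have h6 : (0:ℝ) ≤ |Real.sin (Real.pi * j / k)| := abs_nonneg _
      have h7 : r * ↑m / ↑k = r * ((m:ℝ) / ↑k) := by ring
      nlinarith [mul_nonneg hr.le h6]
    have hpos : 0 < r * m / k := by
      have : 0 < (m:ℝ) := by exact_mod_cast hm1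
      positivity
    have hb1 : ‖pt N k r y2 0 - pt N k r y2 j‖ ^ (-p) ≤ (r * m / k) ^ (-p) :=
      Real.rpow_le_rpow_of_nonpos hpos hdist (by linarith)
    have hb2 : (r * m / k) ^ (-p) = ((k:ℝ)/r) ^ p * (m:ℝ) ^ (-p) := by
      rw [Real.rpow_neg hpos.le, Real.rpow_neg (Nat.cast_nonneg m),
        ← Real.inv_rpow hpos.le, ← Real.inv_rpow (Nat.cast_nonneg m),
        ← Real.mul_rpow (by positivity) (by positivity)]
      congr 1
      field_simp
    have hb3 : (m:ℝ) ^ (-p) ≤ ((j:ℝ) ^ (-p)) + (((k-j : ℕ):ℝ) ^ (-p)) := by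
      rcases Nat.le_total j (k - j) with h | h
      · have : m = j := by omega
        rw [this]
        have : (0:ℝ) ≤ ((k-j:ℕ):ℝ) ^ (-p) := Real.rpow_nonneg (Nat.cast_nonneg _) _
        linarith
      · have : m = k - j := by omega
        rw [this]
        have : (0:ℝ) ≤ ((j:ℕ):ℝ) ^ (-p) := Real.rpow_nonneg (Nat.cast_nonneg _) _
        linarith
    calc ‖pt N k r y2 0 - pt N k r y2 j‖ ^ (-p) ≤ (r * m / k) ^ (-p) := hb1
      _ = ((k:ℝ)/r) ^ p * (m:ℝ) ^ (-p) := hb2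
      _ ≤ ((k:ℝ)/r) ^ p * (((j:ℝ) ^ (-p)) + (((k-j : ℕ):ℝ) ^ (-p))) := by
          apply mul_le_mul_of_nonneg_left hb3 (by positivity)
  have hsum := Finset.sum_le_sum hterm
  refine hsum.trans ?_
  rw [← Finset.mul_sum, Finset.sum_add_distrib]
  have hrefl : ∑ j ∈ Finset.Ico 1 k, ((k - j : ℕ):ℝ) ^ (-p)
      = ∑ j ∈ Finset.Ico 1 k, ((j:ℕ):ℝ) ^ (-p) := by
    apply Finset.sum_nbij' (i := fun j => k - j) (j := fun j => k - j)
    · intro a ha; rw [Finset.mem_Ico] at *; omega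
    · intro a ha; rw [Finset.mem_Ico] at *; omega
    · intro a ha; rw [Finset.mem_Ico] at ha; omega
    · intro a ha; rw [Finset.mem_Ico] at ha; omega
    · intro a ha; rfl
  rw [hrefl]
  have hle : ∑ j ∈ Finset.Ico 1 k, ((j:ℕ):ℝ) ^ (-p) ≤ S :=
    Summable.sum_le_tsum _ (fun n _ => Real.rpow_nonneg (Nat.cast_nonneg n) _) hS
  have hkr : (0:ℝ) ≤ ((k:ℝ)/r) ^ p := Real.rpow_nonneg (by positivity) _
  calc ((k:ℝ)/r) ^ p * (∑ j ∈ Finset.Ico 1 k, ((j:ℕ):ℝ) ^ (-p) + ∑ j ∈ Finset.Ico 1 k, ((j:ℕ):ℝ) ^ (-p))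
      ≤ ((k:ℝ)/r) ^ p * (S + S) := by
        apply mul_le_mul_of_nonneg_left (by linarith) hkr
    _ = 2 * S * ((k:ℝ)/r) ^ p := by ring

end
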